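/- The series u₁(x) = Σ_{even n ≥ 0} X̃^(n)(x)/n! converges uniformly on [0,a]: the partial sums of the series converge uniformly on [0,a] to a function u₁ : [0,a] → ℂ. -/

import Mathlib

open MeasureTheory Set Filter

/-- The sequence X̃^(n): X̃^(0) ≡ 1; for n ≥ 1, X̃^(n)(x) = n ∫₀ˣ X̃^(n-1)(ξ) dξ
if n is even, and X̃^(n)(x) = n ∫₀ˣ X̃^(n-1)(ξ) q(ξ) dξ if n is odd. -/
noncomputable def Xtilde (q : ℝ → ℂ) : ℕ → ℝ → ℂ
  | 0 => fun _ => 1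
  | n + 1 => fun x => ((n + 1 : ℕ) : ℂ) *
      ∫ ξ in (0:ℝ)..x, Xtilde q n ξ * (if Even (n + 1) then 1 else q ξ)

/-- The sequence X^(n): X^(0) ≡ 1; for n ≥ 1, X^(n)(x) = n ∫₀ˣ X^(n-1)(ξ) q(ξ) dξ
if n is even, and X^(n)(x) = n ∫₀ˣ X^(n-1)(ξ) dξ if n is odd. -/
noncomputable def Xup (q : ℝ → ℂ) : ℕ → ℝ → ℂ
  | 0 => fun _ => 1
  | n + 1 => fun x => ((n + 1 : ℕ) : ℂ) *
      ∫ ξ in (0:ℝ)..x, Xup q n ξ * (if Even (n + 1) then q ξ else 1)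

lemma Xtilde_cont_bound (a : ℝ) (ha : 0 < a) (q : ℝ → ℂ) (hq : ContinuousOn q (Set.Icc 0 a))
    (K : ℝ) (hK1 : 1 ≤ K) (hKq : ∀ ξ ∈ Set.Icc (0:ℝ) a, ‖q ξ‖ ≤ K) :
    ∀ n, ContinuousOn (Xtilde q n) (Set.Icc 0 a) ∧
      ∀ x ∈ Set.Icc (0:ℝ) a, ‖Xtilde q n x‖ ≤ K ^ n * x ^ n := by
  have huIcc : Set.uIcc (0:ℝ) a = Set.Icc 0 a := uIcc_of_le ha.le
  intro n
  induction n with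
  | zero => exact ⟨continuousOn_const, fun x hx => by simp [Xtilde]⟩
  | succ n ih =>
    obtain ⟨hc, hb⟩ := ih
    set f : ℝ → ℂ := fun ξ => Xtilde q n ξ * (if Even (n + 1) then 1 else q ξ) with hf
    have hfc : ContinuousOn f (Set.Icc 0 a) := by
      by_cases h : Even (n + 1)
      · simp only [hf, if_pos h, mul_one]; exact hc
      · simp only [hf, if_neg h]; exact hc.mul hq
    have hfint : IntegrableOn f (Set.Icc 0 a) := hfc.integrableOn_compact isCompact_Icc
    have hfbound : ∀ ξ ∈ Set.Icc (0:ℝ) a, ‖f ξ‖ ≤ K ^ (n + 1) * ξ ^ n := by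
      intro ξ hξ
      have h1 : ‖Xtilde q n ξ‖ ≤ K ^ n * ξ ^ n := hb ξ hξ
      have h2 : ‖(if Even (n + 1) then (1:ℂ) else q ξ)‖ ≤ K := by
        by_cases h : Even (n + 1)
        · simp only [if_pos h, norm_one]; exact hK1
        · simp only [if_neg h]; exact hKq ξ hξ
      calc ‖f ξ‖ = ‖Xtilde q n ξ‖ * ‖(if Even (n + 1) then (1:ℂ) else q ξ)‖ := norm_mul _ _
        _ ≤ (K ^ n * ξ ^ n) * K := by
            exact mul_le_mul h1 h2 (norm_nonneg _)
              (mul_nonneg (pow_nonneg (zero_le_one.trans hK1) n) (pow_nonneg hξ.1 n))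
        _ = K ^ (n + 1) * ξ ^ n := by ring
    constructor
    · show ContinuousOn (fun x => ((n + 1 : ℕ) : ℂ) * ∫ ξ in (0:ℝ)..x, f ξ) _
      refine continuousOn_const.mul ?_
      have := intervalIntegral.continuousOn_primitive_interval (a := 0) (b := a)
        (μ := volume) (f := f) (by rwa [huIcc])
      rwa [huIcc] at this
    · intro x hx
      have hx0 : (0:ℝ) ≤ x := hx.1
      have hsub : Set.Icc (0:ℝ) x ⊆ Set.Icc 0 a := Set.Icc_subset_Icc le_rfl hx.2
      have hgi : IntervalIntegrable (fun ξ => K ^ (n + 1) * ξ ^ n) volume 0 x :=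
        (Continuous.intervalIntegrable (by continuity) 0 x)
      have hnorm : ‖∫ ξ in (0:ℝ)..x, f ξ‖ ≤ |∫ ξ in (0:ℝ)..x, K ^ (n + 1) * ξ ^ n| := by
        apply intervalIntegral.norm_integral_le_abs_of_norm_le _ hgi
        apply ae_restrict_of_forall_mem measurableSet_uIoc
        intro t ht
        rw [Set.uIoc_of_le hx0] at ht
        exact hfbound t (hsub ⟨ht.1.le, ht.2⟩)
      have hgval : ∫ ξ in (0:ℝ)..x, K ^ (n + 1) * ξ ^ n
          = K ^ (n + 1) * (x ^ (n + 1) / (n + 1)) := by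
        rw [intervalIntegral.integral_const_mul, integral_pow]
        simp
      have hval : ‖Xtilde q (n + 1) x‖
          = ((n:ℝ) + 1) * ‖∫ ξ in (0:ℝ)..x, f ξ‖ := by
        show ‖((n + 1 : ℕ) : ℂ) * ∫ ξ in (0:ℝ)..x, f ξ‖ = _
        rw [norm_mul]
        congr 1
        rw [Complex.norm_natCast]
        push_cast
        ring
      rw [hval]
      have habs : |∫ ξ in (0:ℝ)..x, K ^ (n + 1) * ξ ^ n|
          = K ^ (n + 1) * (x ^ (n + 1) / (n + 1)) := by
        have hxp : (0:ℝ) ≤ K ^ (n + 1) * (x ^ (n + 1) / (n + 1)) :=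
          mul_nonneg (pow_nonneg (zero_le_one.trans hK1) _)
            (div_nonneg (pow_nonneg hx0 _) (by positivity))
        rw [hgval, abs_of_nonneg hxp]
      calc ((n:ℝ) + 1) * ‖∫ ξ in (0:ℝ)..x, f ξ‖
          ≤ ((n:ℝ) + 1) * (K ^ (n + 1) * (x ^ (n + 1) / (n + 1))) := by
            rw [← habs]
            exact mul_le_mul_of_nonneg_left hnorm (by positivity)
        _ = K ^ (n + 1) * x ^ (n + 1) := by field_simp


/-- The series u₁(x) = Σ_{even n ≥ 0} X̃^(n)(x)/n! converges uniformly
on [0,a]: its partial sums converge uniformly on [0,a] to a function u₁ : [0,a] → ℂ. -/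
theorem stmt_2 (a : ℝ) (ha : 0 < a) (q : ℝ → ℂ) (hq : ContinuousOn q (Set.Icc 0 a)) :
    ∃ u₁ : ℝ → ℂ, TendstoUniformlyOn
      (fun N x => ∑ k ∈ Finset.range N, Xtilde q (2 * k) x / (Nat.factorial (2 * k) : ℂ))
      u₁ Filter.atTop (Set.Icc 0 a) := by
  obtain ⟨M, hM⟩ := (isCompact_Icc).exists_bound_of_continuousOn hq
  set K := max M 1 with hK
  have hK1 : 1 ≤ K := le_max_right _ _
  have hK0 : 0 ≤ K := le_trans zero_le_one hK1
  have hKq : ∀ ξ ∈ Set.Icc (0:ℝ) a, ‖q ξ‖ ≤ K := fun ξ hξ => (hM ξ hξ).trans (le_max_left _ _)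
  have hmain := Xtilde_cont_bound a ha q hq K hK1 hKq
  have hsum : Summable (fun k : ℕ => (K * a) ^ (2 * k) / (Nat.factorial (2 * k) : ℝ)) := by
    have h := Real.summable_pow_div_factorial (K * a)
    exact h.comp_injective (fun m n h => by omega)
  refine ⟨_, tendstoUniformlyOn_tsum_nat hsum ?_⟩
  intro k x hx
  have hb := (hmain (2 * k)).2 x hx
  rw [norm_div]
  have hfac : ‖((Nat.factorial (2 * k) : ℂ))‖ = (Nat.factorial (2 * k) : ℝ) := by
    simp
  rw [hfac]
  have h1 : ‖Xtilde q (2 * k) x‖ ≤ (K * a) ^ (2 * k) := by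
    refine hb.trans ?_
    rw [← mul_pow]
    exact pow_le_pow_left₀ (mul_nonneg hK0 hx.1) (mul_le_mul_of_nonneg_left hx.2 hK0) _
  gcongr
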